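/- Correctness of the Borda-max single-peaked manipulation reduction: let k_1,...,k_t be positive integers summing to 2K. Consider 3 candidates {a, p, b} with fixed nonmanipulator scores score(p) = 6K, score(a) = score(b) = 9K. Each manipulator i (of weight k_i) casts one of the single-peaked top orders over axis a < p < b, scored by Borda with the max extension; every vote ranking p strictly first gives p 2 points and gives a and b the points: (p>a>b) gives a 1, b 0; (p>b>a) gives b 1, a 0; (p>a∼b) gives both a and b 1. Then there exists an assignment of votes to manipulators ranking p strictly first such that p's final score is ≥ the final scores of both a and b, if and only if some subset of {k_1,...,k_t} sums to K. -/
import Mathlib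


/-- Correctness of the Borda-max single-peaked manipulation reduction:
manipulator `i` of weight `k i` casts vote `v i : Fin 3`
(`0` = p>a>b, `1` = p>b>a, `2` = p>a∼b); p always gets 2 per unit weight,
and under the max extension `a` gets 1 from votes 0 and 2, `b` gets 1 from
votes 1 and 2. With nonmanipulator scores p: 6K, a: 9K, b: 9K, the
manipulators (all ranking p strictly first) can make p's score at least those
of a and b iff some subset of the `k i` sums to `K`. -/
theorem borda_max_single_peaked_reduction_correct
    (t K : ℕ) (k : Fin t → ℕ) (hk : ∀ i, 0 < k i) (hsum : ∑ i, k i = 2 * K) :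
    (∃ v : Fin t → Fin 3,
        6 * K + ∑ i, k i * 2 ≥
          9 * K + ∑ i, k i * (if v i = 0 then 1 else if v i = 1 then 0 else 1) ∧
        6 * K + ∑ i, k i * 2 ≥
          9 * K + ∑ i, k i * (if v i = 0 then 0 else 1)) ↔
      (∃ D : Finset (Fin t), ∑ i ∈ D, k i = K) := by
  have hs2 : ∑ i, k i * 2 = 4 * K := by
    rw [← Finset.sum_mul, hsum]; ring
  constructor
  · rintro ⟨v, h1, h2⟩
    set A := ∑ i, k i * (if v i = 0 then 1 else if v i = 1 then 0 else 1) with hAdef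
    set B := ∑ i, k i * (if v i = 0 then 0 else 1) with hBdef
    have hge : ∑ i, k i ≤ A + B := by
      rw [hAdef, hBdef, ← Finset.sum_add_distrib]
      apply Finset.sum_le_sum
      intro i _
      by_cases h0 : v i = 0 <;> by_cases h1' : v i = 1 <;> simp [h0, h1'] <;> omega
    rw [hs2] at h1 h2
    rw [hsum] at hge
    have hAK : A = K := by omega
    refine ⟨Finset.univ.filter (fun i => v i ≠ 1), ?_⟩
    have : ∑ i ∈ Finset.univ.filter (fun i => v i ≠ 1), k i = A := by
      rw [hAdef, Finset.sum_filter]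
      apply Finset.sum_congr rfl
      intro i _
      by_cases h0 : v i = 0 <;> by_cases h1' : v i = 1 <;> simp [h0, h1']
    rw [this, hAK]
  · rintro ⟨D, hD⟩
    refine ⟨fun i => if i ∈ D then 0 else 1, ?_, ?_⟩
    · have h1 : ∑ i, k i * (if (if i ∈ D then (0 : Fin 3) else 1) = 0 then 1 else
          if (if i ∈ D then (0 : Fin 3) else 1) = 1 then 0 else 1)
          = ∑ i, if i ∈ D then k i else 0 := by
        apply Finset.sum_congr rfl
        intro i _
        by_cases h : i ∈ D <;> simp [h]
      rw [hs2, h1, Finset.sum_ite_mem, Finset.univ_inter, hD]; omega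
    · have h1 : ∑ i, k i * (if (if i ∈ D then (0 : Fin 3) else 1) = 0 then 0 else 1)
          = ∑ i, if i ∈ D then 0 else k i := by
        apply Finset.sum_congr rfl
        intro i _
        by_cases h : i ∈ D <;> simp [h]
      have h2 : (∑ i, if i ∈ D then k i else 0) + (∑ i, if i ∈ D then 0 else k i)
          = ∑ i, k i := by
        rw [← Finset.sum_add_distrib]
        apply Finset.sum_congr rfl
        intro i _
        by_cases h : i ∈ D <;> simp [h]
      rw [Finset.sum_ite_mem, Finset.univ_inter, hD, hsum] at h2
      rw [hs2, h1]; omega
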